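/- Let P be a nilpotent Poisson algebra of dimension n over an arbitrary field with p ≠ 2. If P has an abelian subalgebra of dimension n−2 and no abelian subalgebra of dimension n−1, then P has an abelian ideal of dimension n−2. -/
import Mathlib


variable {F : Type*} [Field F] {P : Type*} [AddCommGroup P] [Module F P]

/-- A subalgebra of a dialgebra (subspace closed under both products). -/
def IsSubalg (mul br : P →ₗ[F] P →ₗ[F] P) (A : Submodule F P) : Prop :=
  ∀ x ∈ A, ∀ y ∈ A, mul x y ∈ A ∧ br x y ∈ A

/-- An ideal of a dialgebra. -/
def IsIdeal (mul br : P →ₗ[F] P →ₗ[F] P) (A : Submodule F P) : Prop :=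
  ∀ x ∈ A, ∀ y : P, mul x y ∈ A ∧ mul y x ∈ A ∧ br x y ∈ A ∧ br y x ∈ A

/-- An abelian subspace: all products of its elements vanish. -/
def IsAbelian (mul br : P →ₗ[F] P →ₗ[F] P) (A : Submodule F P) : Prop :=
  ∀ x ∈ A, ∀ y ∈ A, mul x y = 0 ∧ br x y = 0

/-- span of all products `f a b` with `a ∈ A`, `b ∈ B`. -/
def prodSpan (f : P →ₗ[F] P →ₗ[F] P) (A B : Submodule F P) : Submodule F P :=
  Submodule.span F {z | ∃ a ∈ A, ∃ b ∈ B, z = f a b}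

/-- Lower central series of a Poisson algebra:
`P^(0) = P`, `P^(k+1) = P^(k)·P + [P^(k),P]`. -/
def lcsP (mul br : P →ₗ[F] P →ₗ[F] P) : ℕ → Submodule F P
  | 0 => ⊤
  | (k + 1) => prodSpan mul (lcsP mul br k) ⊤ ⊔ prodSpan br (lcsP mul br k) ⊤

section AuxLemmas

lemma mem_prodSpan (f : P →ₗ[F] P →ₗ[F] P) {A B : Submodule F P} {a b : P}
    (ha : a ∈ A) (hb : b ∈ B) : f a b ∈ prodSpan f A B :=
  Submodule.subset_span ⟨a, ha, b, hb, rfl⟩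

lemma prodSpan_le {f : P →ₗ[F] P →ₗ[F] P} {A B C : Submodule F P}
    (h : ∀ a ∈ A, ∀ b ∈ B, f a b ∈ C) : prodSpan f A B ≤ C := by
  apply Submodule.span_le.2
  rintro z ⟨a, ha, b, hb, rfl⟩
  exact h a ha b hb

lemma prodSpan_mono_left {f : P →ₗ[F] P →ₗ[F] P} {A A' B : Submodule F P}
    (h : A ≤ A') : prodSpan f A B ≤ prodSpan f A' B :=
  prodSpan_le fun a ha b hb => mem_prodSpan f (h ha) hb

lemma lcsP_succ (mul br : P →ₗ[F] P →ₗ[F] P) (k : ℕ) :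
    lcsP mul br (k+1) = prodSpan mul (lcsP mul br k) ⊤ ⊔ prodSpan br (lcsP mul br k) ⊤ := rfl

lemma lcsP_antitone (mul br : P →ₗ[F] P →ₗ[F] P) (k : ℕ) :
    lcsP mul br (k+1) ≤ lcsP mul br k := by
  induction k with
  | zero => exact le_top
  | succ k ih =>
      rw [lcsP_succ, lcsP_succ]
      exact sup_le_sup (prodSpan_mono_left ih) (prodSpan_mono_left ih)

lemma lcs_step_mul (mul br : P →ₗ[F] P →ₗ[F] P) {k : ℕ} {z : P} (y : P)
    (hz : z ∈ lcsP mul br k) : mul z y ∈ lcsP mul br (k+1) := by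
  rw [lcsP_succ]
  exact le_sup_left (α := Submodule F P) (mem_prodSpan mul hz Submodule.mem_top)

lemma lcs_step_br (mul br : P →ₗ[F] P →ₗ[F] P) {k : ℕ} {z : P} (y : P)
    (hz : z ∈ lcsP mul br k) : br z y ∈ lcsP mul br (k+1) := by
  rw [lcsP_succ]
  exact le_sup_right (α := Submodule F P) (mem_prodSpan br hz Submodule.mem_top)

lemma br_anti (br : P →ₗ[F] P →ₗ[F] P) (hskew : ∀ x, br x x = 0) (x y : P) :
    br x y = - br y x := by
  have h := hskew (x + y)
  rw [map_add] at h
  simp only [LinearMap.add_apply, map_add, hskew] at h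
  rw [zero_add, add_zero] at h
  rw [eq_neg_iff_add_eq_zero, add_comm]
  exact h

lemma eigen_aux (W : Submodule F P) (θ : P →ₗ[F] P) (hW : ∀ w ∈ W, θ w ∈ W)
    {v : P} (hv : v ∉ W) {lam : F} (hev : θ v - lam • v ∈ W)
    {k : ℕ} (hk : θ^[k] v ∈ W) : lam = 0 := by
  have key : ∀ j, θ^[j] v - lam ^ j • v ∈ W := by
    intro j
    induction j with
    | zero => simpa using W.zero_mem
    | succ j ih =>
        have h1 : θ^[j+1] v - lam ^ (j+1) • v
            = θ (θ^[j] v - lam ^ j • v) + lam ^ j • (θ v - lam • v) := by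
          rw [Function.iterate_succ_apply']
          simp only [map_sub, map_smul, smul_sub, smul_smul, ← pow_succ]
          abel
        rw [h1]
        exact W.add_mem (hW _ ih) (W.smul_mem _ hev)
  by_contra hlam
  have h2 : lam ^ k • v ∈ W := by
    have := W.sub_mem hk (key k)
    simpa using this
  have h4 := W.smul_mem ((lam ^ k)⁻¹) h2
  rw [smul_smul, inv_mul_cancel₀ (pow_ne_zero k hlam), one_smul] at h4
  exact hv h4

lemma iter_mem_lcs (mul br : P →ₗ[F] P →ₗ[F] P) (θ : P →ₗ[F] P)
    (hstep : ∀ j, ∀ z ∈ lcsP mul br j, θ z ∈ lcsP mul br (j+1)) (v : P) :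
    ∀ k, θ^[k] v ∈ lcsP mul br k := by
  intro k
  induction k with
  | zero => exact Submodule.mem_top
  | succ k ih => rw [Function.iterate_succ_apply']; exact hstep k _ ih

lemma exists_transition (p : ℕ → Prop) (m : ℕ) (hm : p m) (h0 : ¬ p 0) :
    ∃ k, ¬ p k ∧ p (k+1) := by
  induction m with
  | zero => exact absurd hm h0
  | succ m ih =>
      by_cases h : p m
      · exact ih h
      · exact ⟨m, h, hm⟩

lemma finrank_sup_span_singleton [FiniteDimensional F P] {A : Submodule F P} {u : P}
    (hu : u ∉ A) :
    Module.finrank F ↥(A ⊔ Submodule.span F {u}) = Module.finrank F ↥A + 1 := by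
  have hinf : A ⊓ Submodule.span F {u} = ⊥ := by
    rw [eq_bot_iff]
    intro z hz
    rw [Submodule.mem_inf] at hz
    obtain ⟨hzA, hzu⟩ := hz
    rw [Submodule.mem_span_singleton] at hzu
    obtain ⟨c, rfl⟩ := hzu
    rcases eq_or_ne c 0 with rfl | hc
    · simp
    · exact absurd (by simpa [smul_smul, inv_mul_cancel₀ hc] using A.smul_mem c⁻¹ hzA) hu
  have hu0 : u ≠ 0 := fun h => hu (h ▸ A.zero_mem)
  have := Submodule.finrank_sup_add_finrank_inf_eq A (Submodule.span F {u})
  rw [hinf, finrank_span_singleton hu0] at this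
  simpa using this

end AuxLemmas

/-- A nilpotent Poisson algebra of dimension `n` (char ≠ 2) with an abelian
subalgebra of dimension `n−2` but none of dimension `n−1` has an abelian
ideal of dimension `n−2`. -/
theorem nilpotent_abelian_codim_two_ideal [FiniteDimensional F P]
    (hchar : (2 : F) ≠ 0)
    (mul br : P →ₗ[F] P →ₗ[F] P)
    (hcomm : ∀ x y, mul x y = mul y x)
    (hassoc : ∀ x y z, mul (mul x y) z = mul x (mul y z))
    (hskew : ∀ x, br x x = 0)
    (hjac : ∀ x y z, br (br x y) z + br (br y z) x + br (br z x) y = 0)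
    (hleib : ∀ x y z, br (mul x y) z = mul (br x z) y + mul x (br y z))
    (hnil : ∃ m, lcsP mul br m = ⊥)
    (A : Submodule F P) (hab : IsAbelian mul br A)
    (hdim : Module.finrank F A + 2 = Module.finrank F P)
    (hno : ∀ B : Submodule F P, IsSubalg mul br B → IsAbelian mul br B →
      Module.finrank F B + 1 ≠ Module.finrank F P) :
    ∃ I : Submodule F P, IsAbelian mul br I ∧ IsIdeal mul br I ∧
      Module.finrank F I + 2 = Module.finrank F P := by
  classical
  obtain ⟨m, hm⟩ := hnil
  have hanti : ∀ x y, br x y = - br y x := br_anti br hskew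
  -- linearity helpers (first argument)
  have mul_addl : ∀ a b c : P, mul (a + b) c = mul a c + mul b c := by
    intro a b c; rw [map_add]; rfl
  have mul_smull : ∀ (t : F) (a c : P), mul (t • a) c = t • mul a c := by
    intro t a c; rw [map_smul]; rfl
  have mul_negl : ∀ a c : P, mul (-a) c = - mul a c := by
    intro a c; rw [map_neg]; rfl
  have mul_zerol : ∀ c : P, mul 0 c = 0 := by
    intro c; rw [map_zero]; rfl
  have br_addl : ∀ a b c : P, br (a + b) c = br a c + br b c := by
    intro a b c; rw [map_add]; rfl
  have br_smull : ∀ (t : F) (a c : P), br (t • a) c = t • br a c := by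
    intro t a c; rw [map_smul]; rfl
  have br_negl : ∀ a c : P, br (-a) c = - br a c := by
    intro a c; rw [map_neg]; rfl
  have br_zerol : ∀ c : P, br 0 c = 0 := by
    intro c; rw [map_zero]; rfl
  have br_subl : ∀ a b c : P, br (a - b) c = br a c - br b c := by
    intro a b c; rw [map_sub]; rfl
  -- abelian helpers
  have habm : ∀ a ∈ A, ∀ b ∈ A, mul a b = 0 := fun a ha b hb => (hab a ha b hb).1
  have habb : ∀ a ∈ A, ∀ b ∈ A, br a b = 0 := fun a ha b hb => (hab a ha b hb).2
  have hAnetop : A ≠ ⊤ := by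
    intro h
    rw [h, finrank_top] at hdim
    omega
  -- the idealizer N of A
  obtain ⟨N, hmemN⟩ : ∃ N : Submodule F P,
      ∀ y, y ∈ N ↔ ∀ a ∈ A, mul y a ∈ A ∧ br y a ∈ A := by
    refine ⟨⟨⟨⟨{y | ∀ a ∈ A, mul y a ∈ A ∧ br y a ∈ A}, ?_⟩, ?_⟩, ?_⟩, fun y => Iff.rfl⟩
    · intro y z hy hz a ha
      simp only [Set.mem_setOf_eq] at hy hz ⊢
      constructor
      · rw [mul_addl]; exact A.add_mem (hy a ha).1 (hz a ha).1
      · rw [br_addl]; exact A.add_mem (hy a ha).2 (hz a ha).2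
    · intro a ha
      constructor
      · rw [mul_zerol]; exact A.zero_mem
      · rw [br_zerol]; exact A.zero_mem
    · intro t y hy a ha
      simp only [Set.mem_setOf_eq] at hy ⊢
      constructor
      · rw [mul_smull]; exact A.smul_mem t (hy a ha).1
      · rw [br_smull]; exact A.smul_mem t (hy a ha).2
  have hAN : A ≤ N := by
    intro a ha
    rw [hmemN]
    intro b hb
    rw [habm a ha b hb, habb a ha b hb]
    exact ⟨A.zero_mem, A.zero_mem⟩
  -- N is a subalgebra
  have hNsub : ∀ y ∈ N, ∀ z ∈ N, mul y z ∈ N ∧ br y z ∈ N := by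
    intro y hy z hz
    rw [hmemN] at hy hz
    constructor
    · rw [hmemN]
      intro a ha
      constructor
      · rw [hassoc]; exact (hy _ (hz a ha).1).1
      · rw [hleib]
        refine A.add_mem ?_ ((hy _ (hz a ha).2).1)
        rw [hcomm]
        exact (hz _ (hy a ha).2).1
    · rw [hmemN]
      intro a ha
      constructor
      · -- mul (br y z) a ∈ A
        have h1 := hleib a y z
        -- br (mul a y) z = mul (br a z) y + mul a (br y z)
        have h2 : mul a (br y z) = br (mul a y) z - mul (br a z) y := by
          rw [h1]; abel
        have h3 : br (mul a y) z ∈ A := by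
          rw [hanti (mul a y) z]
          refine A.neg_mem ?_
          have : mul a y ∈ A := by rw [hcomm]; exact (hy a ha).1
          exact (hz _ this).2
        have h4 : mul (br a z) y ∈ A := by
          rw [hcomm]
          refine (hy _ ?_).1
          rw [hanti a z]
          exact A.neg_mem (hz a ha).2
        rw [hcomm, h2]
        exact A.sub_mem h3 h4
      · -- br (br y z) a ∈ A
        have h1 := hjac y z a
        rw [add_assoc] at h1
        have h2 := eq_neg_of_add_eq_zero_left h1
        have h3 : br (br z a) y ∈ A := by
          rw [hanti (br z a) y]
          exact A.neg_mem ((hy _ (hz a ha).2).2)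
        have h4 : br (br a y) z ∈ A := by
          rw [hanti a y, br_negl, hanti _ z]
          exact A.neg_mem (A.neg_mem ((hz _ (hy a ha).2).2))
        rw [h2]
        exact A.neg_mem (A.add_mem h3 h4)
  -- A is strictly contained in N
  obtain ⟨u₁, hu₁N, hu₁A⟩ : ∃ u₁ ∈ N, u₁ ∉ A := by
    obtain ⟨k, hk, hk1⟩ := exists_transition (fun k => lcsP mul br k ≤ A) m
      (show lcsP mul br m ≤ A by rw [hm]; exact bot_le)
      (fun h => hAnetop (top_le_iff.1 h))
    have hkN : lcsP mul br k ≤ N := by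
      intro z hz
      rw [hmemN]
      intro a ha
      exact ⟨hk1 (lcs_step_mul mul br a hz), hk1 (lcs_step_br mul br a hz)⟩
    obtain ⟨z, hz, hzA⟩ := SetLike.not_le_iff_exists.1 hk
    exact ⟨z, hkN hz, hzA⟩
  have hAltN : A < N := lt_of_le_of_ne hAN (fun h => hu₁A (h ▸ hu₁N))
  have hrankAN : Module.finrank F ↥A < Module.finrank F ↥N :=
    Submodule.finrank_lt_finrank_of_lt hAltN
  by_cases hNtop : N = ⊤
  · -- A is already an ideal
    refine ⟨A, hab, ?_, hdim⟩
    intro z hz y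
    have hyN : y ∈ N := hNtop ▸ Submodule.mem_top
    rw [hmemN] at hyN
    obtain ⟨h1, h2⟩ := hyN z hz
    refine ⟨by rw [hcomm]; exact h1, h1, ?_, h2⟩
    rw [hanti]
    exact A.neg_mem h2
  · -- the hard case: finrank N = finrank A + 1
    have hrankNle : Module.finrank F ↥N ≤ Module.finrank F P := Submodule.finrank_le N
    have hrankNne : Module.finrank F ↥N ≠ Module.finrank F P :=
      fun h => hNtop (Submodule.eq_top_of_finrank_eq h)
    have hNrank : Module.finrank F ↥N = Module.finrank F ↥A + 1 := by omega
    -- N is an ideal of P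
    have hNid : ∀ y : P, ∀ z ∈ N, mul y z ∈ N ∧ br y z ∈ N := by
      obtain ⟨k, hk, hk1⟩ := exists_transition (fun k => ¬ (N ⊔ lcsP mul br k = ⊤)) m
        (show ¬ (N ⊔ lcsP mul br m = ⊤) by
          rw [hm, sup_bot_eq]; exact hNtop)
        (by
          simp only [not_not]
          exact sup_top_eq N)
      rw [not_not] at hk
      -- N ⊔ lcsP (k+1) = N
      have hMeq : N ⊔ lcsP mul br (k+1) = N := by
        by_contra hne
        have hlt : N < N ⊔ lcsP mul br (k+1) :=
          lt_of_le_of_ne le_sup_left (fun h => hne h.symm)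
        have h1 : Module.finrank F ↥N < Module.finrank F ↥(N ⊔ lcsP mul br (k+1)) :=
          Submodule.finrank_lt_finrank_of_lt hlt
        have h2 : Module.finrank F ↥(N ⊔ lcsP mul br (k+1)) ≤ Module.finrank F P :=
          Submodule.finrank_le _
        have h3 : Module.finrank F ↥(N ⊔ lcsP mul br (k+1)) = Module.finrank F P := by omega
        exact hk1 (Submodule.eq_top_of_finrank_eq h3)
      have hlcsN : lcsP mul br (k+1) ≤ N := by
        rw [← hMeq]; exact le_sup_right
      intro y z hz
      have hy : y ∈ N ⊔ lcsP mul br k := by rw [hk]; exact Submodule.mem_top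
      obtain ⟨n', hn', p, hp, rfl⟩ := Submodule.mem_sup.1 hy
      constructor
      · rw [mul_addl]
        exact N.add_mem (hNsub n' hn' z hz).1 (hlcsN (lcs_step_mul mul br z hp))
      · rw [br_addl]
        exact N.add_mem (hNsub n' hn' z hz).2 (hlcsN (lcs_step_br mul br z hp))
    -- choose x outside N
    obtain ⟨x, hxN⟩ : ∃ x, x ∉ N := by
      by_contra h
      push_neg at h
      exact hNtop (Submodule.eq_top_iff'.2 h)
    -- decomposition of N along A and any v ∈ N \ A
    have hNeq : ∀ v, v ∈ N → v ∉ A → ∀ z ∈ N, ∃ a ∈ A, ∃ c : F, z = a + c • v := by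
      intro v hvN hvA z hz
      have hle : A ⊔ Submodule.span F {v} ≤ N :=
        sup_le hAN ((Submodule.span_singleton_le_iff_mem v N).2 hvN)
      have heq : A ⊔ Submodule.span F {v} = N := by
        apply Submodule.eq_of_le_of_finrank_le hle
        rw [finrank_sup_span_singleton hvA, hNrank]
      rw [← heq] at hz
      obtain ⟨a, ha, w, hw, rfl⟩ := Submodule.mem_sup.1 hz
      obtain ⟨c, rfl⟩ := Submodule.mem_span_singleton.1 hw
      exact ⟨a, ha, c, rfl⟩
    -- contradiction machine: no element centralizing A outside A
    have habscontra : ∀ v, v ∉ A → mul v v = 0 → (∀ a ∈ A, mul v a = 0) →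
        (∀ a ∈ A, br v a = 0) → False := by
      intro v hvA hvv hmv hbv
      have hdec : ∀ z ∈ A ⊔ Submodule.span F {v}, ∃ a ∈ A, ∃ c : F, z = a + c • v := by
        intro z hz
        obtain ⟨a, ha, w, hw, rfl⟩ := Submodule.mem_sup.1 hz
        obtain ⟨c, rfl⟩ := Submodule.mem_span_singleton.1 hw
        exact ⟨a, ha, c, rfl⟩
      have habel : IsAbelian mul br (A ⊔ Submodule.span F {v}) := by
        intro z hz z' hz'
        obtain ⟨a, ha, c, rfl⟩ := hdec z hz
        obtain ⟨b, hb, d, rfl⟩ := hdec z' hz'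
        constructor
        · rw [mul_addl, mul_smull,
            map_add (mul a) b (d • v), map_smul (mul a) d v,
            map_add (mul v) b (d • v), map_smul (mul v) d v]
          rw [habm a ha b hb, hmv b hb, hvv, hcomm a v, hmv a ha]
          simp
        · rw [br_addl, br_smull,
            map_add (br a) b (d • v), map_smul (br a) d v,
            map_add (br v) b (d • v), map_smul (br v) d v]
          rw [habb a ha b hb, hbv b hb, hskew, hanti a v, hbv a ha]
          simp
      have hsubalg : IsSubalg mul br (A ⊔ Submodule.span F {v}) := by
        intro z hz z' hz'
        obtain ⟨h1, h2⟩ := habel z hz z' hz'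
        rw [h1, h2]
        exact ⟨Submodule.zero_mem _, Submodule.zero_mem _⟩
      refine hno _ hsubalg habel ?_
      rw [finrank_sup_span_singleton hvA]
      omega
    -- Step (a): mul x a ∈ A for all a ∈ A
    have hxA : ∀ a ∈ A, mul x a ∈ A := by
      by_contra h
      push_neg at h
      obtain ⟨a', ha', hu'⟩ := h
      set u' := mul x a' with hu'def
      have hu'N : u' ∈ N := (hNid x a' (hAN ha')).1
      have hu'a : ∀ a ∈ A, mul u' a = 0 := by
        intro a ha
        rw [hu'def, hassoc, habm a' ha' a ha, map_zero]
      have hu'u' : mul u' u' = 0 := by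
        rw [hu'def, hassoc, hcomm a' u', hu'a a' ha', map_zero]
      have hbru' : ∀ a ∈ A, br u' a = 0 := by
        intro a ha
        have h1 := hleib x a' a
        rw [habb a' ha' a ha, map_zero, add_zero] at h1
        obtain ⟨b, hb, c, hc⟩ := hNeq u' hu'N hu' (br x a) (hNid x a (hAN ha)).2
        have h2 : br u' a = mul (br x a) a' := h1
        rw [h2, hc, mul_addl, mul_smull, habm b hb a' ha', hu'a a' ha', smul_zero, add_zero]
      exact habscontra u' hu' hu'u' hu'a hbru'
    -- choose a₀ with br x a₀ ∉ A
    obtain ⟨a₀, ha₀, huA⟩ : ∃ a₀ ∈ A, br x a₀ ∉ A := by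
      by_contra h
      push_neg at h
      apply hxN
      rw [hmemN]
      intro a ha
      exact ⟨hxA a ha, h a ha⟩
    set u := br x a₀ with hudef
    have huN : u ∈ N := (hNid x a₀ (hAN ha₀)).2
    -- decomposition helper for elements of A under br x
    have hgdec : ∀ a ∈ A, ∃ c : F, br x a - c • u ∈ A := by
      intro a ha
      obtain ⟨b, hb, c, hc⟩ := hNeq u huN huA (br x a) (hNid x a (hAN ha)).2
      exact ⟨c, by rw [hc]; simpa using hb⟩
    -- mul u a = 0 for all a ∈ A
    have hu_mulA : ∀ a ∈ A, mul u a = 0 := by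
      intro a ha
      have h1 := hleib a x a₀
      rw [habb a ha a₀ ha₀, mul_zerol, zero_add] at h1
      have h2 : mul a x ∈ A := by rw [hcomm a x]; exact hxA a ha
      have h3 : br (mul a x) a₀ = 0 := habb _ h2 a₀ ha₀
      rw [h3] at h1
      rw [hcomm u a]
      exact h1.symm
    -- decompose br x u = w + ε • u
    obtain ⟨w, hwA, ε, hxu_eq⟩ := hNeq u huN huA (br x u) (hNid x u huN).2
    -- mul u u = 0
    have hu2 : mul u u = 0 := by
      have h1 := hleib u a₀ x
      -- br (mul u a₀) x = mul (br u x) a₀ + mul u (br a₀ x)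
      rw [hu_mulA a₀ ha₀, br_zerol] at h1
      have h2 : br u x = - (w + ε • u) := by rw [hanti u x, ← hxu_eq]
      rw [h2, mul_negl, mul_addl, mul_smull, habm w hwA a₀ ha₀, hu_mulA a₀ ha₀,
        smul_zero, add_zero, neg_zero, zero_add] at h1
      have h3 : br a₀ x = -u := by rw [hanti a₀ x, ← hudef]
      rw [h3, map_neg] at h1
      exact (neg_eq_zero.1 h1.symm)
    -- e₀ and the bracket action of u on A
    set e₀ := br u a₀ with he₀def
    have he₀A : e₀ ∈ A := ((hmemN u).1 huN a₀ ha₀).2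
    have hbru : ∀ a ∈ A, ∀ c : F, br x a - c • u ∈ A → br u a = c • e₀ := by
      intro a ha c hc
      have h1 := hjac x a₀ a
      rw [habb a₀ ha₀ a ha, br_zerol, add_zero] at h1
      -- h1 : br (br x a₀) a + br (br a x) a₀ = 0
      have h2 : br u a = - br (br a x) a₀ := by
        rw [← hudef] at h1
        exact eq_neg_of_add_eq_zero_left h1
      rw [h2, hanti a x, br_negl, neg_neg]
      have h3 : br x a = (br x a - c • u) + c • u := by abel
      rw [h3, br_addl, br_smull, habb _ hc a₀ ha₀, zero_add, ← he₀def]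
    -- branch on e₀
    by_cases he₀ : e₀ = 0
    · refine (habscontra u huA hu2 hu_mulA ?_).elim
      intro a ha
      obtain ⟨c, hc⟩ := hgdec a ha
      rw [hbru a ha c hc, he₀, smul_zero]
    · -- main branch : e₀ ≠ 0
      obtain ⟨c₀, hc₀⟩ := hgdec e₀ he₀A
      have hue₀ : br u e₀ = c₀ • e₀ := hbru e₀ he₀A c₀ hc₀
      have hbot : ∀ (θ : P →ₗ[F] P),
          (∀ j, ∀ z ∈ lcsP mul br j, θ z ∈ lcsP mul br (j+1)) →
          ∀ v : P, θ^[m] v = 0 := by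
        intro θ hstep v
        have h := iter_mem_lcs mul br θ hstep v m
        rw [hm, Submodule.mem_bot] at h
        exact h
      have hstep_bru : ∀ j, ∀ z ∈ lcsP mul br j, br u z ∈ lcsP mul br (j+1) := by
        intro j z hz
        rw [hanti u z]
        exact Submodule.neg_mem _ (lcs_step_br mul br u hz)
      have hstep_brx : ∀ j, ∀ z ∈ lcsP mul br j, br x z ∈ lcsP mul br (j+1) := by
        intro j z hz
        rw [hanti x z]
        exact Submodule.neg_mem _ (lcs_step_br mul br x hz)
      have hstep_mulx : ∀ j, ∀ z ∈ lcsP mul br j, mul x z ∈ lcsP mul br (j+1) := by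
        intro j z hz
        rw [hcomm x z]
        exact lcs_step_mul mul br x hz
      have hWbot : ∀ (θ : P →ₗ[F] P), ∀ w' ∈ (⊥ : Submodule F P), θ w' ∈ (⊥ : Submodule F P) := by
        intro θ w' hw'
        rw [Submodule.mem_bot] at hw' ⊢
        rw [hw', map_zero]
      have he₀bot : e₀ ∉ (⊥ : Submodule F P) := by simpa [Submodule.mem_bot] using he₀
      have hc₀0 : c₀ = 0 := by
        refine eigen_aux ⊥ (br u) (hWbot (br u)) he₀bot ?_
          (show (⇑(br u))^[m] e₀ ∈ (⊥:Submodule F P) by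
            rw [hbot (br u) hstep_bru e₀]; exact Submodule.zero_mem _)
        rw [hue₀]
        simp
      have hxe₀A : br x e₀ ∈ A := by
        have h := hc₀
        rw [hc₀0, zero_smul, sub_zero] at h
        exact h
      have hue₀0 : br u e₀ = 0 := by rw [hue₀, hc₀0, zero_smul]
      -- br x e₀ = ε • e₀ and hence ε = 0
      have hxe₀ : br x e₀ = ε • e₀ := by
        have h1 := hjac u x a₀
        have t2 : br (br x a₀) u = 0 := by rw [← hudef, hskew]
        have t1 : br (br u x) a₀ = - (ε • e₀) := by
          rw [hanti u x, hxu_eq, br_negl, br_addl, br_smull, habb w hwA a₀ ha₀,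
            ← he₀def, zero_add]
        have t3 : br (br a₀ u) x = br x e₀ := by
          rw [hanti a₀ u, ← he₀def, br_negl, hanti e₀ x, neg_neg]
        rw [t1, t2, t3, add_zero] at h1
        have := neg_add_eq_zero.1 h1
        exact this.symm
      have hε0 : ε = 0 := by
        refine eigen_aux ⊥ (br x) (hWbot (br x)) he₀bot ?_
          (show (⇑(br x))^[m] e₀ ∈ (⊥:Submodule F P) by
            rw [hbot (br x) hstep_brx e₀]; exact Submodule.zero_mem _)
        rw [hxe₀]
        simp
      have hwxu : br x u = w := by rw [hxu_eq, hε0, zero_smul, add_zero]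
      have hxe₀0 : br x e₀ = 0 := by rw [hxe₀, hε0, zero_smul]
      -- ad_x stabilizes A twice: br x (br x a) ∈ A for a ∈ A
      have hxx : ∀ a ∈ A, br x (br x a) ∈ A := by
        intro a ha
        obtain ⟨c, hc⟩ := hgdec a ha
        have hu_brxa : br u (br x a) = 0 := by
          have h1 := hjac u x a
          have t1 : br (br u x) a = 0 := by
            rw [hanti u x, hwxu, br_negl, habb w hwA a ha, neg_zero]
          have t3 : br (br a u) x = 0 := by
            rw [hanti a u, hbru a ha c hc, br_negl, br_smull, hanti e₀ x, hxe₀0]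
            simp
          rw [t1, t3, zero_add, add_zero] at h1
          rw [hanti u (br x a), h1, neg_zero]
        have ha' : br x a - c • u ∈ A := hc
        obtain ⟨c', hc'⟩ := hgdec _ ha'
        have h2 : br u (br x a - c • u) = c' • e₀ := hbru _ ha' c' hc'
        have h3 : br u (br x a - c • u) = 0 := by
          rw [map_sub, map_smul, hu_brxa, hskew, smul_zero, sub_zero]
        have hc'0 : c' = 0 := by
          rw [h3] at h2
          rcases smul_eq_zero.1 h2.symm with h | h
          · exact h
          · exact absurd h he₀
        have h4 : br x (br x a - c • u) ∈ A := by
          have := hc'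
          rw [hc'0, zero_smul, sub_zero] at this
          exact this
        have h5 : br x (br x a) = br x (br x a - c • u) + c • br x u := by
          rw [map_sub, map_smul]
          abel
        rw [h5, hwxu]
        exact A.add_mem h4 (A.smul_mem c hwA)
      -- br x w ∈ A
      have hgw : br x w ∈ A := by
        obtain ⟨cw, hcw⟩ := hgdec w hwA
        have hstep2 : ∀ j, ∀ z ∈ lcsP mul br j,
            ((br x) ∘ₗ (br x)) z ∈ lcsP mul br (j+1) := by
          intro j z hz
          rw [LinearMap.comp_apply]
          exact lcsP_antitone mul br (j+1) (hstep_brx (j+1) _ (hstep_brx j z hz))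
        have hcw0 : cw = 0 := by
          refine eigen_aux A ((br x) ∘ₗ (br x)) ?_ huA ?_
            (show (⇑((br x) ∘ₗ (br x)))^[m] u ∈ A by
              rw [hbot _ hstep2 u]; exact A.zero_mem)
          · intro z hz
            rw [LinearMap.comp_apply]
            exact hxx z hz
          · rw [LinearMap.comp_apply, hwxu]
            exact hcw
        have := hcw
        rw [hcw0, zero_smul, sub_zero] at this
        exact this
      -- mul x u ∈ A
      have hδA : mul x u ∈ A := by
        obtain ⟨v', hv'A, δ, hμ⟩ := hNeq u huN huA (mul x u) (hNid x u huN).1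
        have hδ0 : δ = 0 := by
          refine eigen_aux A (mul x) (fun z hz => hxA z hz) huA ?_
            (show (⇑(mul x))^[m] u ∈ A by
              rw [hbot _ hstep_mulx u]; exact A.zero_mem)
          rw [hμ]
          simpa using hv'A
        rw [hμ, hδ0, zero_smul, add_zero]
        exact hv'A
      -- br x (mul x a) ∈ A for a ∈ A
      have hSg : ∀ a ∈ A, br x (mul x a) ∈ A := by
        intro a ha
        have h1 := hleib x a x
        rw [hskew, mul_zerol, zero_add] at h1
        obtain ⟨c, hc⟩ := hgdec a ha
        have h2 : mul x (br a x) ∈ A := by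
          rw [hanti a x, map_neg]
          refine A.neg_mem ?_
          have h3 : br x a = (br x a - c • u) + c • u := by abel
          rw [h3, map_add, map_smul]
          exact A.add_mem (hxA _ hc) (A.smul_mem c hδA)
        rw [hanti x (mul x a), h1]
        exact A.neg_mem h2
      -- br x (mul x u) ∈ A
      have hxuB : br x (mul x u) ∈ A := by
        have h1 := hleib x u x
        rw [hskew, mul_zerol, zero_add] at h1
        have h2 : mul x (br u x) ∈ A := by
          rw [hanti u x, hwxu, map_neg]
          exact A.neg_mem (hxA w hwA)
        rw [hanti x (mul x u), h1]
        exact A.neg_mem h2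
      -- the ideal I = B ⊔ F u, where B = {a ∈ A | br x a ∈ A}
      set Bsub : Submodule F P := A ⊓ Submodule.comap (br x) A with hBdef
      have hBmem : ∀ b, b ∈ Bsub ↔ b ∈ A ∧ br x b ∈ A := by
        intro b
        rw [hBdef, Submodule.mem_inf, Submodule.mem_comap]
      have hBA : Bsub ≤ A := inf_le_left
      have huB : u ∉ Bsub := fun h => huA (hBA h)
      set I : Submodule F P := Bsub ⊔ Submodule.span F {u} with hIdef
      have he₀B : e₀ ∈ Bsub := (hBmem e₀).2 ⟨he₀A, by rw [hxe₀0]; exact A.zero_mem⟩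
      have hwB : w ∈ Bsub := (hBmem w).2 ⟨hwA, hgw⟩
      have hbrub : ∀ b ∈ Bsub, br u b = 0 := by
        intro b hb
        obtain ⟨hbA, hbx⟩ := (hBmem b).1 hb
        have h := hbru b hbA 0 (by simpa using hbx)
        simpa using h
      have hBI : Bsub ≤ I := le_sup_left
      have huI : u ∈ I := Submodule.mem_sup_right (Submodule.mem_span_singleton_self u)
      -- I is abelian
      have habI : IsAbelian mul br I := by
        intro z hz z' hz'
        obtain ⟨b, hb, y, hy, rfl⟩ := Submodule.mem_sup.1 hz
        obtain ⟨c, rfl⟩ := Submodule.mem_span_singleton.1 hy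
        obtain ⟨b', hb', y', hy', rfl⟩ := Submodule.mem_sup.1 hz'
        obtain ⟨c', rfl⟩ := Submodule.mem_span_singleton.1 hy'
        obtain ⟨hbA, -⟩ := (hBmem b).1 hb
        obtain ⟨hb'A, -⟩ := (hBmem b').1 hb'
        constructor
        · rw [mul_addl, mul_smull, map_add (mul b) b' (c' • u), map_smul (mul b) c' u,
            map_add (mul u) b' (c' • u), map_smul (mul u) c' u]
          rw [habm b hbA b' hb'A, hcomm b u, hu_mulA b hbA, hu_mulA b' hb'A, hu2]
          simp
        · rw [br_addl, br_smull, map_add (br b) b' (c' • u), map_smul (br b) c' u,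
            map_add (br u) b' (c' • u), map_smul (br u) c' u]
          rw [habb b hbA b' hb'A, hanti b u, hbrub b hb, hbrub b' hb', hskew]
          simp
      -- decomposition of arbitrary elements of P
      have htopdec : ∀ y : P, ∃ a ∈ A, ∃ c : F, ∃ d : F, y = a + c • u + d • x := by
        intro y
        have htop : N ⊔ Submodule.span F {x} = ⊤ := by
          apply Submodule.eq_top_of_finrank_eq
          rw [finrank_sup_span_singleton hxN]
          omega
        have hy : y ∈ N ⊔ Submodule.span F {x} := htop ▸ Submodule.mem_top
        obtain ⟨nn, hnn, y', hy', rfl⟩ := Submodule.mem_sup.1 hy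
        obtain ⟨d, rfl⟩ := Submodule.mem_span_singleton.1 hy'
        obtain ⟨a, ha, c, hc⟩ := hNeq u huN huA nn hnn
        exact ⟨a, ha, c, d, by rw [hc]⟩
      -- products of anything with u lie in I
      have hkey_u : ∀ y : P, mul y u ∈ I ∧ br y u ∈ I := by
        intro y
        obtain ⟨a, ha, c, d, rfl⟩ := htopdec y
        constructor
        · rw [mul_addl, mul_addl, mul_smull, mul_smull]
          have h1 : mul a u = 0 := by rw [hcomm a u]; exact hu_mulA a ha
          have h2 : mul x u ∈ Bsub := (hBmem _).2 ⟨hδA, hxuB⟩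
          rw [h1, hu2]
          simpa using I.smul_mem d (hBI h2)
        · rw [br_addl, br_addl, br_smull, br_smull]
          obtain ⟨ca, hca⟩ := hgdec a ha
          have h1 : br a u ∈ I := by
            rw [hanti a u, hbru a ha ca hca]
            exact I.neg_mem (I.smul_mem ca (hBI he₀B))
          have h2 : br x u ∈ I := by rw [hwxu]; exact hBI hwB
          rw [hskew]
          exact I.add_mem (I.add_mem h1 (by simpa using I.zero_mem)) (I.smul_mem d h2)
      -- products of anything with elements of B lie in I
      have hkey_b : ∀ b ∈ Bsub, ∀ y : P, mul y b ∈ I ∧ br y b ∈ I := by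
        intro b hb y
        obtain ⟨hbA, hbx⟩ := (hBmem b).1 hb
        obtain ⟨a, ha, c, d, rfl⟩ := htopdec y
        constructor
        · rw [mul_addl, mul_addl, mul_smull, mul_smull]
          have h2 : mul x b ∈ Bsub := (hBmem _).2 ⟨hxA b hbA, hSg b hbA⟩
          rw [habm a ha b hbA, hu_mulA b hbA]
          simpa using I.smul_mem d (hBI h2)
        · rw [br_addl, br_addl, br_smull, br_smull]
          have h2 : br x b ∈ Bsub := (hBmem _).2 ⟨hbx, hxx b hbA⟩
          rw [habb a ha b hbA, hbrub b hb]
          simpa using I.smul_mem d (hBI h2)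
      have hIdeal : IsIdeal mul br I := by
        intro z hz y
        obtain ⟨b, hb, y', hy', rfl⟩ := Submodule.mem_sup.1 hz
        obtain ⟨c, rfl⟩ := Submodule.mem_span_singleton.1 hy'
        have h1 : mul y (b + c • u) ∈ I := by
          rw [map_add (mul y), map_smul (mul y)]
          exact I.add_mem (hkey_b b hb y).1 (I.smul_mem c (hkey_u y).1)
        have h2 : br y (b + c • u) ∈ I := by
          rw [map_add (br y), map_smul (br y)]
          exact I.add_mem (hkey_b b hb y).2 (I.smul_mem c (hkey_u y).2)
        refine ⟨by rw [hcomm]; exact h1, h1, ?_, h2⟩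
        rw [hanti]
        exact I.neg_mem h2
      -- dimension count
      have hrankB : Module.finrank F ↥A = Module.finrank F ↥Bsub + 1 := by
        set φ : ↥A →ₗ[F] P ⧸ A := A.mkQ ∘ₗ (br x) ∘ₗ A.subtype with hφdef
        have hφapp : ∀ a : ↥A, φ a = A.mkQ (br x ↑a) := fun a => rfl
        have hker : LinearMap.ker φ = Submodule.comap A.subtype Bsub := by
          ext a
          rw [LinearMap.mem_ker, hφapp, Submodule.mkQ_apply, Submodule.Quotient.mk_eq_zero,
            Submodule.mem_comap, Submodule.subtype_apply, hBmem]
          exact ⟨fun h => ⟨a.2, h⟩, fun h => h.2⟩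
        have hrange : LinearMap.range φ = Submodule.span F {A.mkQ u} := by
          apply le_antisymm
          · rintro z ⟨a, rfl⟩
            obtain ⟨c, hc⟩ := hgdec ↑a a.2
            rw [Submodule.mem_span_singleton]
            refine ⟨c, ?_⟩
            have h0 : A.mkQ (br x ↑a - c • u) = 0 := by
              rw [Submodule.mkQ_apply, Submodule.Quotient.mk_eq_zero]
              exact hc
            rw [map_sub, map_smul, sub_eq_zero] at h0
            rw [hφapp, ← h0]
          · rw [Submodule.span_le, Set.singleton_subset_iff]
            refine ⟨⟨a₀, ha₀⟩, ?_⟩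
            rw [hφapp]
        have hφrank := LinearMap.finrank_range_add_finrank_ker φ
        rw [hker, hrange] at hφrank
        have h1 : Module.finrank F ↥(Submodule.span F {A.mkQ u}) = 1 := by
          apply finrank_span_singleton
          intro h
          apply huA
          rwa [Submodule.mkQ_apply, Submodule.Quotient.mk_eq_zero] at h
        have h2 : Module.finrank F ↥(Submodule.comap A.subtype Bsub)
            = Module.finrank F ↥Bsub :=
          LinearEquiv.finrank_eq (Submodule.comapSubtypeEquivOfLe hBA)
        rw [h1, h2] at hφrank
        omega
      have hrankI : Module.finrank F ↥I = Module.finrank F ↥Bsub + 1 := by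
        rw [hIdef]
        exact finrank_sup_span_singleton huB
      exact ⟨I, habI, hIdeal, by omega⟩
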